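/- For positive integers a, b, the quantity 12ab/gcd(a,b)² · ∫₀¹ ((ax))((bx)) dx is an integer (in fact it equals 1). -/

import Mathlib

open Real

/-- The sawtooth (first Bernoulli) function `((x))`. -/
noncomputable def saw (x : ℝ) : ℝ := if Int.fract x = 0 then 0 else Int.fract x - 1/2

noncomputable def g (x : ℝ) : ℝ := Int.fract x - 1/2

lemma g_meas : Measurable g := measurable_fract.sub measurable_const

lemma g_abs_le (x : ℝ) : |g x| ≤ 1 := by
  have h1 := Int.fract_nonneg x
  have h2 := Int.fract_lt_one x
  rw [abs_le]; constructor <;> simp [g] <;> nlinarith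

lemma g_periodic : Function.Periodic g 1 := by
  intro x; simp [g, Int.fract_add_one]

/-- interval integrability of products of `g`-compositions. -/
lemma intInt (c d u v : ℝ) (hc : c ≠ 0) (hd : d ≠ 0) :
    IntervalIntegrable (fun x => g (c * x) * g (d * x)) MeasureTheory.volume u v := by
  rw [intervalIntegrable_iff]
  apply MeasureTheory.Measure.integrableOn_of_bounded (M := 1)
  · exact measure_Ioc_lt_top.ne
  · exact ((g_meas.comp (measurable_const_mul c)).mul
      (g_meas.comp (measurable_const_mul d))).aestronglyMeasurable
  · refine MeasureTheory.ae_of_all _ fun x => ?_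
    have := g_abs_le (c * x); have := g_abs_le (d * x)
    calc ‖g (c*x) * g (d*x)‖ = |g (c*x)| * |g (d*x)| := abs_mul _ _
    _ ≤ 1 * 1 := by gcongr <;> positivity
    _ = 1 := by ring

/-- floor computation on a unit interval. -/
lemma fract_shift (k b : ℕ) (hb : 0 < b) {t : ℝ} (ht0 : 0 ≤ t) (ht1 : t < 1) :
    Int.fract (((k : ℝ) + t) / b) = ((k % b : ℕ) + t) / b := by
  have hbR : (0:ℝ) < b := by exact_mod_cast hb
  have hfloor : ⌊((k : ℝ) + t) / b⌋ = ((k / b : ℕ) : ℤ) := by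
    rw [Int.floor_eq_iff]
    simp only [Int.cast_natCast]
    have h1 : ((k / b : ℕ) : ℝ) * b ≤ k := by exact_mod_cast Nat.div_mul_le_self k b
    have h2' : k < k / b * b + b := Nat.lt_div_mul_add hb
    have h2 : (k : ℝ) + 1 ≤ ((k / b : ℕ) : ℝ) * b + b := by exact_mod_cast h2'
    constructor
    · rw [le_div_iff₀ hbR]
      linarith
    · rw [div_lt_iff₀ hbR]
      have hx : ((k / b : ℕ) : ℝ) * b + b = (((k / b : ℕ) : ℝ) + 1) * b := by ring
      linarith
  rw [Int.fract, hfloor, Int.cast_natCast]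
  have hk : (k : ℝ) = (k % b : ℕ) + (k / b : ℕ) * b := by
    exact_mod_cast (Nat.mod_add_div' k b).symm
  push_cast
  rw [hk]
  field_simp
  ring

/-- polynomial integral. -/
lemma poly_int (c e : ℝ) :
    ∫ u in (0:ℝ)..1, (u + c) * (u + e) = 1/3 + (c + e)/2 + c * e := by
  have : ∀ u : ℝ, (u + c) * (u + e) = u^2 + (c + e) * u + c * e := fun u => by ring
  simp only [this]
  rw [intervalIntegral.integral_add, intervalIntegral.integral_add]
  · rw [integral_pow, intervalIntegral.integral_const_mul, integral_id,
      intervalIntegral.integral_const, smul_eq_mul]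
    ring
  · exact (continuous_pow 2).intervalIntegrable _ _
  · exact (continuous_const.mul continuous_id).intervalIntegrable _ _
  · exact ((continuous_pow 2).add (continuous_const.mul continuous_id)).intervalIntegrable _ _
  · exact continuous_const.intervalIntegrable _ _

/-- CRT reindexing of sums. -/
lemma crt_sum {a b : ℕ} (ha : 0 < a) (hb : 0 < b) (h : Nat.Coprime a b) (f : ℕ → ℕ → ℝ) :
    ∑ k ∈ Finset.range (a * b), f (k % a) (k % b)
      = ∑ i ∈ Finset.range a, ∑ j ∈ Finset.range b, f i j := by
  rw [← Finset.sum_product']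
  apply Finset.sum_nbij' (i := fun k => (k % a, k % b))
    (j := fun p => (Nat.chineseRemainder h p.1 p.2 : ℕ) % (a * b))
  · intro k hk
    simp only [Finset.mem_product, Finset.mem_range] at *
    exact ⟨Nat.mod_lt _ ha, Nat.mod_lt _ hb⟩
  · intro p hp
    simp only [Finset.mem_range] at *
    exact Nat.mod_lt _ (Nat.mul_pos ha hb)
  · intro k hk
    simp only [Finset.mem_range] at hk
    have h1 : k ≡ (Nat.chineseRemainder h (k % a) (k % b) : ℕ) [MOD a * b] :=
      Nat.chineseRemainder_modEq_unique h (Nat.mod_modEq k a).symm (Nat.mod_modEq k b).symm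
    have := h1.symm
    unfold Nat.ModEq at this
    rw [this, Nat.mod_eq_of_lt hk]
  · intro p hp
    simp only [Finset.mem_product, Finset.mem_range] at hp
    have h1 := (Nat.chineseRemainder h p.1 p.2).2.1
    have h2 := (Nat.chineseRemainder h p.1 p.2).2.2
    have f1 : (Nat.chineseRemainder h p.1 p.2 : ℕ) % a = p.1 := by
      have := h1; unfold Nat.ModEq at this
      rw [this, Nat.mod_eq_of_lt hp.1]
    have f2 : (Nat.chineseRemainder h p.1 p.2 : ℕ) % b = p.2 := by
      have := h2; unfold Nat.ModEq at this
      rw [this, Nat.mod_eq_of_lt hp.2]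
    have e1 : (Nat.chineseRemainder h p.1 p.2 : ℕ) % (a*b) % a = p.1 := by
      rw [Nat.mod_mod_of_dvd _ (dvd_mul_right a b), f1]
    have e2 : (Nat.chineseRemainder h p.1 p.2 : ℕ) % (a*b) % b = p.2 := by
      rw [Nat.mod_mod_of_dvd _ (dvd_mul_left b a), f2]
    simp [e1, e2, f1, f2, Prod.ext_iff]
  · intro k hk; rfl

lemma sum_id_real (n : ℕ) : ∑ j ∈ Finset.range n, (j : ℝ) = n * (n - 1) / 2 := by
  induction n with
  | zero => simp
  | succ m ih => rw [Finset.sum_range_succ, ih]; push_cast; ring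

lemma sum_affine (n : ℕ) (α β : ℝ) :
    ∑ j ∈ Finset.range n, (α + β * (j : ℝ)) = n * α + β * (n * (n - 1) / 2) := by
  rw [Finset.sum_add_distrib, Finset.sum_const, Finset.card_range, ← Finset.mul_sum,
    sum_id_real, nsmul_eq_mul]

/-- The coprime case. -/
lemma coprime_case {a b : ℕ} (ha : 0 < a) (hb : 0 < b) (h : Nat.Coprime a b) :
    ∫ x in (0:ℝ)..1, g (a * x) * g (b * x) = 1 / (12 * a * b) := by
  have haR : (0:ℝ) < a := by exact_mod_cast ha
  have hbR : (0:ℝ) < b := by exact_mod_cast hb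
  have habR : (0:ℝ) < (a:ℝ) * b := by positivity
  set F : ℝ → ℝ := fun u => g (u / b) * g (u / a) with hF
  have hFint : ∀ u v : ℝ, IntervalIntegrable F MeasureTheory.volume u v := by
    intro u v
    have hcongr : F = fun u => g ((1/(b:ℝ)) * u) * g ((1/(a:ℝ)) * u) := by
      funext u; simp only [hF, one_div, inv_mul_eq_div]
    rw [hcongr]
    exact intInt _ _ u v (by positivity) (by positivity)
  have step1a : ∫ x in (0:ℝ)..1, g (a * x) * g (b * x)
      = ∫ x in (0:ℝ)..1, F (((a:ℝ)*b) * x) := by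
    apply intervalIntegral.integral_congr
    intro x _
    simp only [hF]
    congr 2
    · field_simp
    · field_simp
  have step1 : ∫ x in (0:ℝ)..1, g (a * x) * g (b * x)
      = ((a:ℝ) * b)⁻¹ • ∫ u in (0:ℝ)..((a:ℝ)*b), F u := by
    rw [step1a, intervalIntegral.integral_comp_mul_left F habR.ne', mul_zero, mul_one]
  have step2 : ∫ u in (0:ℝ)..((a:ℝ)*b), F u
      = ∑ k ∈ Finset.range (a*b), ∫ u in ((k:ℕ):ℝ)..(((k+1:ℕ)):ℝ), F u := by
    rw [intervalIntegral.sum_integral_adjacent_intervals (a := fun k : ℕ => (k:ℝ))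
      (fun k _ => hFint _ _)]
    norm_num
  have step3 : ∀ k : ℕ, (∫ u in ((k:ℕ):ℝ)..(((k+1:ℕ)):ℝ), F u)
      = ∫ u in (0:ℝ)..1, F (u + k) := by
    intro k
    rw [intervalIntegral.integral_comp_add_right F (k:ℝ)]
    push_cast
    rw [zero_add, add_comm (1:ℝ) (k:ℝ)]
  have step4 : ∀ k : ℕ, (∫ u in (0:ℝ)..1, F (u + k))
      = (1/((a:ℝ)*b)) * (1/3 + ((((k % b : ℕ):ℝ) - (b:ℝ)/2) + (((k % a : ℕ):ℝ) - (a:ℝ)/2))/2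
          + (((k % b : ℕ):ℝ) - (b:ℝ)/2) * (((k % a : ℕ):ℝ) - (a:ℝ)/2)) := by
    intro k
    have h1 : ({(1:ℝ)}ᶜ : Set ℝ) ∈ MeasureTheory.ae MeasureTheory.volume :=
      MeasureTheory.compl_mem_ae_iff.mpr Real.volume_singleton
    have hae : ∀ᵐ u : ℝ, u ∈ Set.uIoc (0:ℝ) 1 →
        F (u + k) = (1/((a:ℝ)*b)) * ((u + (((k % b : ℕ):ℝ) - (b:ℝ)/2))
          * (u + (((k % a : ℕ):ℝ) - (a:ℝ)/2))) := by
      filter_upwards [h1] with u hu hmem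
      rw [Set.uIoc_of_le (by norm_num : (0:ℝ) ≤ 1)] at hmem
      have hu0 : 0 ≤ u := le_of_lt hmem.1
      have hu1 : u < 1 := lt_of_le_of_ne hmem.2 (by simpa using hu)
      have e1 : Int.fract ((u + (k:ℝ))/b) = (((k % b : ℕ):ℝ) + u)/b := by
        rw [add_comm u (k:ℝ)]; exact fract_shift k b hb hu0 hu1
      have e2 : Int.fract ((u + (k:ℝ))/a) = (((k % a : ℕ):ℝ) + u)/a := by
        rw [add_comm u (k:ℝ)]; exact fract_shift k a ha hu0 hu1
      simp only [hF, g]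
      rw [e1, e2]
      field_simp
      ring
    rw [intervalIntegral.integral_congr_ae hae, intervalIntegral.integral_const_mul, poly_int]
  rw [step1, step2]
  simp only [step3, step4]
  rw [crt_sum ha hb h (fun i j => (1/((a:ℝ)*b)) * (1/3 + ((((j:ℕ):ℝ) - (b:ℝ)/2)
    + (((i:ℕ):ℝ) - (a:ℝ)/2))/2 + (((j:ℕ):ℝ) - (b:ℝ)/2) * (((i:ℕ):ℝ) - (a:ℝ)/2)))]
  have inner : ∀ i : ℕ, (∑ j ∈ Finset.range b, (1/((a:ℝ)*b)) * (1/3 + (((j:ℝ) - (b:ℝ)/2)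
      + ((i:ℝ) - (a:ℝ)/2))/2 + ((j:ℝ) - (b:ℝ)/2) * ((i:ℝ) - (a:ℝ)/2)))
      = ((b:ℝ) * ((1/((a:ℝ)*b)) * (1/3 - (b:ℝ)/4 - (a:ℝ)/4 + (a:ℝ)*(b:ℝ)/4)
            + (1/((a:ℝ)*b)) * (1/2 - (b:ℝ)/2) * (i:ℝ))
          + ((1/((a:ℝ)*b)) * (1/2 - (a:ℝ)/2) + (1/((a:ℝ)*b)) * (i:ℝ))
            * ((b:ℝ)*((b:ℝ)-1)/2)) := by
    intro i
    have e : ∀ j ∈ Finset.range b, (1/((a:ℝ)*b)) * (1/3 + (((j:ℝ) - (b:ℝ)/2)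
        + ((i:ℝ) - (a:ℝ)/2))/2 + ((j:ℝ) - (b:ℝ)/2) * ((i:ℝ) - (a:ℝ)/2))
        = ((1/((a:ℝ)*b)) * (1/3 - (b:ℝ)/4 - (a:ℝ)/4 + (a:ℝ)*(b:ℝ)/4)
            + (1/((a:ℝ)*b)) * (1/2 - (b:ℝ)/2) * (i:ℝ))
          + ((1/((a:ℝ)*b)) * (1/2 - (a:ℝ)/2) + (1/((a:ℝ)*b)) * (i:ℝ)) * (j:ℝ) := by
      intro j _; ring
    rw [Finset.sum_congr rfl e]
    exact sum_affine b _ _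
  have e2 : ∀ i ∈ Finset.range a, ((b:ℝ) * ((1/((a:ℝ)*b)) * (1/3 - (b:ℝ)/4 - (a:ℝ)/4 + (a:ℝ)*(b:ℝ)/4)
            + (1/((a:ℝ)*b)) * (1/2 - (b:ℝ)/2) * (i:ℝ))
          + ((1/((a:ℝ)*b)) * (1/2 - (a:ℝ)/2) + (1/((a:ℝ)*b)) * (i:ℝ))
            * ((b:ℝ)*((b:ℝ)-1)/2))
      = ((b:ℝ) * ((1/((a:ℝ)*b)) * (1/3 - (b:ℝ)/4 - (a:ℝ)/4 + (a:ℝ)*(b:ℝ)/4))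
          + (1/((a:ℝ)*b)) * (1/2 - (a:ℝ)/2) * ((b:ℝ)*((b:ℝ)-1)/2))
        + ((b:ℝ) * ((1/((a:ℝ)*b)) * (1/2 - (b:ℝ)/2))
          + (1/((a:ℝ)*b)) * ((b:ℝ)*((b:ℝ)-1)/2)) * (i:ℝ) := by
    intro i _; ring
  rw [Finset.sum_congr rfl (fun i hi => inner i), Finset.sum_congr rfl e2, sum_affine,
    smul_eq_mul]
  field_simp
  ring

/-- The set where `fract (c*x) = 0` is null (for `c ≠ 0`). -/
lemma null_fract (c : ℝ) (hc : c ≠ 0) :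
    MeasureTheory.volume {x : ℝ | Int.fract (c * x) = 0} = 0 := by
  apply MeasureTheory.measure_mono_null
    (t := Set.range (fun n : ℤ => (n : ℝ) / c))
  · intro x hx
    simp only [Set.mem_setOf_eq] at hx
    refine ⟨⌊c * x⌋, ?_⟩
    have : c * x - ⌊c * x⌋ = 0 := hx
    field_simp
    linarith
  · exact (Set.countable_range _).measure_zero _

lemma saw_eq_g_ae (a b : ℕ) (ha : 0 < a) (hb : 0 < b) :
    ∫ x in (0:ℝ)..1, saw (a * x) * saw (b * x)
      = ∫ x in (0:ℝ)..1, g (a * x) * g (b * x) := by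
  have haR : ((a:ℝ)) ≠ 0 := by positivity
  have hbR : ((b:ℝ)) ≠ 0 := by positivity
  apply intervalIntegral.integral_congr_ae
  have hA : {x : ℝ | Int.fract ((a:ℝ) * x) = 0}ᶜ ∈ MeasureTheory.ae MeasureTheory.volume :=
    MeasureTheory.compl_mem_ae_iff.mpr (null_fract _ haR)
  have hB : {x : ℝ | Int.fract ((b:ℝ) * x) = 0}ᶜ ∈ MeasureTheory.ae MeasureTheory.volume :=
    MeasureTheory.compl_mem_ae_iff.mpr (null_fract _ hbR)
  filter_upwards [hA, hB] with x h1 h2 _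
  simp only [Set.mem_compl_iff, Set.mem_setOf_eq] at h1 h2
  simp [saw, g, h1, h2]

theorem franel_normalized_eq_one (a b : ℕ) (ha : 0 < a) (hb : 0 < b) :
    (12 * a * b : ℝ) / (Nat.gcd a b : ℝ)^2 *
      ∫ x in (0:ℝ)..1, saw (a * x) * saw (b * x) = 1 := by
  set d := Nat.gcd a b with hd
  have hdpos : 0 < d := Nat.gcd_pos_of_pos_left b ha
  have hda : d ∣ a := Nat.gcd_dvd_left a b
  have hdb : d ∣ b := Nat.gcd_dvd_right a b
  set a₁ := a / d with ha1
  set b₁ := b / d with hb1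
  have ha₁pos : 0 < a₁ := Nat.div_pos (Nat.le_of_dvd ha hda) hdpos
  have hb₁pos : 0 < b₁ := Nat.div_pos (Nat.le_of_dvd hb hdb) hdpos
  have hco : Nat.Coprime a₁ b₁ := Nat.coprime_div_gcd_div_gcd hdpos
  have haa : a₁ * d = a := Nat.div_mul_cancel hda
  have hbb : b₁ * d = b := Nat.div_mul_cancel hdb
  have haR : ((a:ℝ)) = (a₁:ℝ) * d := by exact_mod_cast haa.symm
  have hbR : ((b:ℝ)) = (b₁:ℝ) * d := by exact_mod_cast hbb.symm
  have hdR : (0:ℝ) < d := by exact_mod_cast hdpos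
  have ha₁R : (0:ℝ) < a₁ := by exact_mod_cast ha₁pos
  have hb₁R : (0:ℝ) < b₁ := by exact_mod_cast hb₁pos
  set G : ℝ → ℝ := fun u => g ((a₁:ℝ) * u) * g ((b₁:ℝ) * u) with hG
  have hper : Function.Periodic G 1 := by
    intro x
    simp only [hG]
    have e1 : (a₁:ℝ) * (x + 1) = (a₁:ℝ) * x + ((a₁:ℤ) : ℝ) := by push_cast; ring
    have e2 : (b₁:ℝ) * (x + 1) = (b₁:ℝ) * x + ((b₁:ℤ) : ℝ) := by push_cast; ring
    rw [e1, e2]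
    simp only [g, Int.fract_add_intCast]
  have hGint : ∀ u v : ℝ, IntervalIntegrable G MeasureTheory.volume u v :=
    fun u v => intInt _ _ u v ha₁R.ne' hb₁R.ne'
  have key : ∫ x in (0:ℝ)..1, g (a * x) * g (b * x) = 1 / (12 * a₁ * b₁) := by
    have s1 : ∫ x in (0:ℝ)..1, g (a * x) * g (b * x)
        = ∫ x in (0:ℝ)..1, G ((d:ℝ) * x) := by
      apply intervalIntegral.integral_congr
      intro x _
      simp only [hG]
      rw [haR, hbR]
      ring_nf
    have s2 : ∫ x in (0:ℝ)..1, G ((d:ℝ) * x) = (d:ℝ)⁻¹ • ∫ u in (0:ℝ)..(d:ℝ), G u := by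
      rw [intervalIntegral.integral_comp_mul_left G hdR.ne', mul_zero, mul_one]
    have s3 : ∫ u in (0:ℝ)..(d:ℝ), G u
        = ∑ k ∈ Finset.range d, ∫ u in ((k:ℕ):ℝ)..(((k+1:ℕ)):ℝ), G u := by
      rw [intervalIntegral.sum_integral_adjacent_intervals (a := fun k : ℕ => (k:ℝ))
        (fun k _ => hGint _ _)]
      norm_num
    have s4 : ∀ k : ℕ, (∫ u in ((k:ℕ):ℝ)..(((k+1:ℕ)):ℝ), G u) = ∫ u in (0:ℝ)..1, G u := by
      intro k
      have := hper.intervalIntegral_add_eq (k:ℝ) 0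
      push_cast
      rw [this, zero_add]
    rw [s1, s2, s3]
    simp only [s4, Finset.sum_const, Finset.card_range, nsmul_eq_mul, smul_eq_mul,
      coprime_case ha₁pos hb₁pos hco]
    field_simp
    simp only [hG, coprime_case ha₁pos hb₁pos hco]
    field_simp
  rw [saw_eq_g_ae a b ha hb, key, haR, hbR]
  have : (d:ℝ) ≠ 0 := hdR.ne'
  field_simp
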